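/- Let q be odd and 2 ≤ k ≤ q-2. The covering radius ρ of PRS(q+1,k) satisfies q - k ≤ ρ ≤ q - k + 1. -/

import Mathlib

open Polynomial

/-- Error distance of a word `u` to a code `C`: minimum Hamming distance to a codeword. -/
noncomputable def errDist {ι F : Type*} [Fintype ι] [DecidableEq F]
    (C : Set (ι → F)) (u : ι → F) : ℕ :=
  sInf (hammingDist u '' C)

/-- Covering radius of a code: maximum error distance over all words. -/
noncomputable def covRad {ι F : Type*} [Fintype ι] [DecidableEq F]
    (C : Set (ι → F)) : ℕ :=
  sSup (Set.range (errDist C))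

/-- Minimum distance of a code: minimum Hamming weight of a nonzero codeword. -/
noncomputable def minDist {ι F : Type*} [Fintype ι] [DecidableEq F] [Zero F]
    (C : Set (ι → F)) : ℕ :=
  sInf (hammingNorm '' (C \ {0}))

/-- Reed-Solomon code: evaluations of polynomials of degree `< k` at the points `x i`. -/
def RSCode (F : Type*) [Field F] {ι : Type*} (x : ι → F) (k : ℕ) : Set (ι → F) :=
  {u | ∃ f : F[X], f.degree < (k : WithBot ℕ) ∧ ∀ i, u i = f.eval (x i)}

/-- Projective Reed-Solomon code of length `q+1` (words indexed by `Option F`,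
with `none` the point at infinity carrying the coefficient of `X^(k-1)`). -/
def PRSCode (F : Type*) [Field F] (k : ℕ) : Set (Option F → F) :=
  {w | ∃ g : F[X], g.degree < (k : WithBot ℕ) ∧
    (∀ a : F, w (some a) = g.eval a) ∧ w none = g.coeff (k - 1)}

section Helpers
open Finset
variable {F : Type*} [Field F] [Fintype F] [DecidableEq F] {k : ℕ}

lemma prs_errDist_le (hkq : k ≤ Fintype.card F) (w : Option F → F) :
    errDist (PRSCode F k) w ≤ Fintype.card F - k + 1 := by
  obtain ⟨s, _, hsc⟩ := Finset.exists_subset_card_eq (s := (univ : Finset F)) (n := k) (by simpa using hkq)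
  set g : F[X] := Lagrange.interpolate s id (fun a => w (some a)) with hg
  have hinj : Set.InjOn (id : F → F) s := Function.injective_id.injOn
  have hdeg : g.degree < (k : WithBot ℕ) := by
    have := Lagrange.degree_interpolate_lt (fun a => w (some a)) hinj; rwa [hsc] at this
  set c : Option F → F := fun i => Option.elim i (g.coeff (k-1)) (fun a => g.eval a) with hc
  have hcmem : c ∈ PRSCode F k := ⟨g, hdeg, fun a => rfl, rfl⟩
  refine le_trans (Nat.sInf_le ⟨c, hcmem, rfl⟩) ?_
  have hsub : ({i | w i ≠ c i} : Finset (Option F)) ⊆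
      insertNone ({a | w (some a) ≠ c (some a)} : Finset F) := by
    intro o ho
    rw [mem_insertNone]
    intro a ha
    simp only [mem_filter, mem_univ, true_and] at ho ⊢
    subst ha; exact ho
  have h1 : hammingDist w c ≤ ({a | w (some a) ≠ c (some a)} : Finset F).card + 1 := by
    simpa [card_insertNone, hammingDist] using Finset.card_le_card hsub
  have h2 : ({a | w (some a) ≠ c (some a)} : Finset F) ⊆ sᶜ := by
    intro a ha
    simp only [mem_filter, mem_univ, true_and] at ha
    rw [mem_compl]
    intro has
    exact ha (Lagrange.eval_interpolate_at_node (fun a => w (some a)) hinj has).symm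
  have h3 := Finset.card_le_card h2
  rw [card_compl, hsc] at h3
  exact le_trans h1 (by omega)

lemma prs_exists_far (hkq : k ≤ Fintype.card F) :
    ∃ w : Option F → F, Fintype.card F - k ≤ errDist (PRSCode F k) w := by
  refine ⟨fun i => Option.elim i 0 (fun a => a ^ k), ?_⟩
  set w : Option F → F := fun i => Option.elim i 0 (fun a => a ^ k) with hw
  have hne : (hammingDist w '' PRSCode F k).Nonempty :=
    ⟨_, ⟨0, ⟨0, by rw [degree_zero]; exact bot_lt_iff_ne_bot.mpr (by exact_mod_cast WithBot.coe_ne_bot), by simp, by simp⟩, rfl⟩⟩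
  refine le_csInf hne ?_
  rintro n ⟨c, ⟨g, hdeg, hca, -⟩, rfl⟩
  set p : F[X] := X ^ k - g with hp
  have hpd : p.degree = (k : WithBot ℕ) := by
    rw [hp, sub_eq_add_neg]
    rw [degree_add_eq_left_of_degree_lt (by simpa using hdeg)]
    exact degree_X_pow k
  have hp0 : p ≠ 0 := fun h => by simp [h] at hpd
  have hagree : ({a | w (some a) = c (some a)} : Finset F) ⊆ p.roots.toFinset := by
    intro a ha
    simp only [mem_filter, mem_univ, true_and] at ha
    rw [Multiset.mem_toFinset, mem_roots hp0]
    simp only [hp, IsRoot, eval_sub, eval_pow, eval_X]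
    rw [← hca a, ← ha]
    simp [hw]
  have hroots : p.roots.toFinset.card ≤ k := by
    refine le_trans (Multiset.toFinset_card_le _) ?_
    have := Polynomial.card_roots' p
    have hnd : p.natDegree = k := natDegree_eq_of_degree_eq_some hpd
    omega
  have hcard : ({a | w (some a) = c (some a)} : Finset F).card ≤ k :=
    le_trans (Finset.card_le_card hagree) hroots
  have hdis : Fintype.card F - k ≤ ({a | w (some a) ≠ c (some a)} : Finset F).card := by
    have := Finset.card_filter_add_card_filter_not
      (s := (univ : Finset F)) (p := fun a => w (some a) = c (some a))
    simp only [card_univ] at this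
    simp only [ne_eq]
    omega
  refine le_trans hdis ?_
  have : (({a | w (some a) ≠ c (some a)} : Finset F).image some) ⊆
      ({i | w i ≠ c i} : Finset (Option F)) := by
    intro o ho
    simp only [mem_image, mem_filter, mem_univ, true_and] at ho ⊢
    obtain ⟨a, ha, rfl⟩ := ho; exact ha
  have := Finset.card_le_card this
  rwa [Finset.card_image_of_injective _ (Option.some_injective F)] at this

end Helpers

/-- For odd `q` and `2 ≤ k ≤ q-2`, the covering radius `ρ` of `PRS(q+1,k)` satisfies
`q - k ≤ ρ ≤ q - k + 1`. -/
theorem prs_covRad_bounds {F : Type*} [Field F] [Fintype F] [DecidableEq F] {k : ℕ}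
    (hq : Odd (Fintype.card F)) (hk2 : 2 ≤ k) (hk : k ≤ Fintype.card F - 2) :
    Fintype.card F - k ≤ covRad (PRSCode F k) ∧
      covRad (PRSCode F k) ≤ Fintype.card F - k + 1 := by
  have hq2 : 2 ≤ Fintype.card F := by
    have := Fintype.card_pos (α := F); omega
  have hkq : k ≤ Fintype.card F := by omega
  have hbdd : BddAbove (Set.range (errDist (PRSCode F k))) :=
    ⟨Fintype.card F - k + 1, by rintro n ⟨w, rfl⟩; exact prs_errDist_le hkq w⟩
  constructor
  · obtain ⟨w, hw⟩ := prs_exists_far (F := F) (k := k) hkq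
    exact le_trans hw (le_csSup hbdd ⟨w, rfl⟩)
  · exact csSup_le ⟨_, ⟨fun _ => 0, rfl⟩⟩ (by rintro n ⟨w, rfl⟩; exact prs_errDist_le hkq w)
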